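/- Let k = 𝔽_q with q odd and let G = ψ(GL₄(k)) act on the right on k⁶ (lexicographic exterior-square coordinates). Every vector of the form (0,0,s,0,t,u) with (s,t,u) ≠ 0 spans a line equivalent under G to the line spanned by (0,0,0,0,0,1). -/

import Mathlib

open Matrix

def lexPair : Fin 6 → Fin 4 × Fin 4 := ![(0,1),(0,2),(0,3),(1,2),(1,3),(2,3)]

/-- The exterior square representation `ψ : GL₄ → GL₆` in matrix form. -/
def extSq {k : Type*} [CommRing k] (A : Matrix (Fin 4) (Fin 4) k) :
    Matrix (Fin 6) (Fin 6) k :=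
  Matrix.of fun rs ij =>
    A (lexPair rs).1 (lexPair ij).1 * A (lexPair rs).2 (lexPair ij).2 -
      A (lexPair rs).2 (lexPair ij).1 * A (lexPair rs).1 (lexPair ij).2


namespace MyAux

@[simp] lemma cons_val_five {α : Type*} (x : α) (u : Fin 5 → α) :
    Matrix.vecCons x u 5 = u 4 := rfl

@[simp] lemma lexPair0 : lexPair 0 = (0,1) := rfl
@[simp] lemma lexPair1 : lexPair 1 = (0,2) := rfl
@[simp] lemma lexPair2 : lexPair 2 = (0,3) := rfl
@[simp] lemma lexPair3 : lexPair 3 = (1,2) := rfl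
@[simp] lemma lexPair4 : lexPair 4 = (1,3) := rfl
@[simp] lemma lexPair5 : lexPair 5 = (2,3) := rfl

end MyAux

open MyAux

/-- over a finite field of odd order, every vector of the form
`(0,0,s,0,t,u) ≠ 0` spans a line equivalent under the right action of
`ψ(GL₄(k))` to the line spanned by `(0,0,0,0,0,1)`. -/
theorem middle_zero_vectors_in_decomposable_orbit
    {k : Type*} [Field k] [Fintype k] (hodd : Odd (Fintype.card k))
    (s t u : k) (h : ¬(s = 0 ∧ t = 0 ∧ u = 0)) :
    ∃ A : Matrix (Fin 4) (Fin 4) k, IsUnit A.det ∧ ∃ c : k, c ≠ 0 ∧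
      Matrix.vecMul ![0, 0, s, 0, t, u] (extSq A) = c • ![0, 0, 0, 0, 0, 1] := by
  by_cases hu : u ≠ 0
  · refine ⟨!![1,0,0,0; 0,1,0,0; -s/u, -t/u, 1/u, 0; 0,0,0,1], ?_, 1, one_ne_zero, ?_⟩
    · have : (!![1,0,0,0; 0,1,0,0; -s/u, -t/u, 1/u, 0; 0,0,0,1] : Matrix (Fin 4) (Fin 4) k).det = 1/u := by
        simp [Matrix.det_succ_row_zero, Fin.sum_univ_succ, Fin.succAbove, Matrix.vecHead, Matrix.vecTail]
      rw [this]
      exact isUnit_iff_ne_zero.mpr (by simpa using inv_ne_zero hu)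
    · funext j
      fin_cases j <;>
        simp [Matrix.vecMul, dotProduct, extSq, Fin.sum_univ_six, Matrix.cons_val_zero, Matrix.cons_val_one, Matrix.head_cons, Matrix.cons_val_two, Matrix.cons_val_three, Matrix.cons_val_four, Matrix.head_fin_const, Matrix.vecHead, Matrix.vecTail] <;>
        field_simp <;> ring
  · push_neg at hu
    subst hu
    by_cases ht : t ≠ 0
    · refine ⟨!![1,0,0,0; -s/t, 0, 1/t, 0; 0,1,0,0; 0,0,0,1], ?_, 1, one_ne_zero, ?_⟩
      · have : (!![1,0,0,0; -s/t, 0, 1/t, 0; 0,1,0,0; 0,0,0,1] : Matrix (Fin 4) (Fin 4) k).det = -(1/t) := by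
          simp [Matrix.det_succ_row_zero, Fin.sum_univ_succ, Fin.succAbove, Matrix.vecHead, Matrix.vecTail]
        rw [this]
        exact isUnit_iff_ne_zero.mpr (by simpa using inv_ne_zero ht)
      · funext j
        fin_cases j <;>
          simp [Matrix.vecMul, dotProduct, extSq, Fin.sum_univ_six, Matrix.cons_val_zero, Matrix.cons_val_one, Matrix.head_cons, Matrix.cons_val_two, Matrix.cons_val_three, Matrix.cons_val_four, Matrix.head_fin_const, Matrix.vecHead, Matrix.vecTail] <;>
          field_simp <;> ring
    · push_neg at ht
      subst ht
      have hs : s ≠ 0 := by tauto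
      refine ⟨!![0, 0, 1/s, 0; 1,0,0,0; 0,1,0,0; 0,0,0,1], ?_, 1, one_ne_zero, ?_⟩
      · have : (!![0, 0, 1/s, 0; 1,0,0,0; 0,1,0,0; 0,0,0,1] : Matrix (Fin 4) (Fin 4) k).det = 1/s := by
          simp [Matrix.det_succ_row_zero, Fin.sum_univ_succ, Fin.succAbove, Matrix.vecHead, Matrix.vecTail]
        rw [this]
        exact isUnit_iff_ne_zero.mpr (by simpa using inv_ne_zero hs)
      · funext j
        fin_cases j <;>
          simp [Matrix.vecMul, dotProduct, extSq, Fin.sum_univ_six, Matrix.cons_val_zero, Matrix.cons_val_one, Matrix.head_cons, Matrix.cons_val_two, Matrix.cons_val_three, Matrix.cons_val_four, Matrix.head_fin_const, Matrix.vecHead, Matrix.vecTail] <;>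
          field_simp <;> ring
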